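/- arXiv:1901.05146 — 6 statements merged into one kernel-verified Lean document; each statement's English description precedes it below -/
import Mathlib

section
/- (Ingleton's Lemma) Let (K, |·|) be a spherically complete nonarchimedean valued field, let E be a K-vector space equipped with an ultrametric vector seminorm p, let F be a vector subspace of E, and let f : F → K be a K-linear map with |f(x)| ≤ p(x) for all x ∈ F. Then for every a ∈ E \ F, there exists a K-linear map f̃ : F + K•a → K extending f such that |f̃(x)| ≤ p(x) for all x ∈ F + K•a. -/
/-- A closed ball of a valued field `(K, v)`: a set of the form `{x | v (x - c) ≤ r}`
with `r ≥ 0`. -/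
def IsClosedBall {K : Type*} [Field K] (v : AbsoluteValue K ℝ) (s : Set K) : Prop :=
  ∃ (c : K) (r : ℝ), 0 ≤ r ∧ s = {x : K | v (x - c) ≤ r}

/-- A valued field `(K, v)` is spherically complete if every chain of closed balls
has nonempty intersection. -/
def SphericallyComplete {K : Type*} [Field K] (v : AbsoluteValue K ℝ) : Prop :=
  ∀ B : Set (Set K), (∀ b ∈ B, IsClosedBall v b) → IsChain (· ⊆ ·) B → (⋂₀ B).Nonempty

/-- **Ingleton's Lemma.** Let `(K, v)` be a spherically complete
nonarchimedean valued field, let `E` be a `K`-vector space equipped with an ultrametric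
vector seminorm `p`, let `F` be a vector subspace of `E`, and let `f : F → K` be a
`K`-linear map with `v (f x) ≤ p x` for all `x ∈ F`.  Then for every `a ∈ E \ F` there
exists a `K`-linear map `f̃ : F + K•a → K` extending `f` such that `v (f̃ x) ≤ p x` for
all `x ∈ F + K•a`. -/
theorem ingleton_lemma (K : Type u) [Field K] (v : AbsoluteValue K ℝ)
    (hna : ∀ x y : K, v (x + y) ≤ max (v x) (v y))
    (hsc : SphericallyComplete v)
    (E : Type w) [AddCommGroup E] [Module K E] (p : E → ℝ)
    (hp_smul : ∀ (c : K) (x : E), p (c • x) = v c * p x)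
    (hp_ultra : ∀ x y : E, p (x + y) ≤ max (p x) (p y))
    (F : Submodule K E) (f : F →ₗ[K] K) (hf : ∀ x : F, v (f x) ≤ p x)
    (a : E) (ha : a ∉ F) :
    ∃ g : ↥(F ⊔ Submodule.span K {a}) →ₗ[K] K,
      (∀ (x : E) (hx : x ∈ F), g ⟨x, Submodule.mem_sup_left hx⟩ = f ⟨x, hx⟩) ∧
        ∀ y : ↥(F ⊔ Submodule.span K {a}), v (g y) ≤ p y := by
  -- basic facts about p
  have hp0 : p 0 = 0 := by
    have := hp_smul 0 0
    simpa using this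
  have hpneg : ∀ x : E, p (-x) = p x := by
    intro x
    have := hp_smul (-1) x
    simpa using this
  have hpnn : ∀ x : E, 0 ≤ p x := by
    intro x
    have h := hp_ultra x (-x)
    simp [hp0, hpneg] at h
    linarith [le_max_left (p x) (p x)]
  have hpsub : ∀ x y : E, p (x - y) ≤ max (p x) (p y) := by
    intro x y
    have := hp_ultra x (-y)
    simpa [sub_eq_add_neg, hpneg] using this
  -- the family of balls
  set B : Set (Set K) := Set.range (fun x : F => {lam : K | v (lam - f x) ≤ p (a - (x : E))})
    with hB
  have hball : ∀ b ∈ B, IsClosedBall v b := by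
    rintro b ⟨x, rfl⟩
    exact ⟨f x, p (a - (x : E)), hpnn _, rfl⟩
  -- centers are close
  have hcenters : ∀ x y : F, v (f x - f y) ≤ max (p (a - (x : E))) (p (a - (y : E))) := by
    intro x y
    have h1 : v (f x - f y) ≤ p ((x : F) - y) := by
      rw [← map_sub]
      exact hf (x - y)
    have h2 : (x : E) - y = (a - (y : E)) - (a - (x : E)) := by abel
    have h3 : p ((a - (y : E)) - (a - (x : E))) ≤ max (p (a - (y : E))) (p (a - (x : E))) :=
      hpsub _ _
    calc v (f x - f y) ≤ p ((x : E) - y) := h1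
      _ ≤ max (p (a - (y : E))) (p (a - (x : E))) := by rw [h2]; exact h3
      _ = max (p (a - (x : E))) (p (a - (y : E))) := max_comm _ _
  have hvsub : ∀ s t u : K, v (s - u) ≤ max (v (s - t)) (v (t - u)) := by
    intro s t u
    have := hna (s - t) (t - u)
    simpa using this
  have hchain : IsChain (· ⊆ ·) B := by
    rintro _ ⟨x, rfl⟩ _ ⟨y, rfl⟩ -
    rcases le_total (p (a - (x : E))) (p (a - (y : E))) with h | h
    · left
      intro lam hl
      simp only [Set.mem_setOf_eq] at hl ⊢
      calc v (lam - f y) ≤ max (v (lam - f x)) (v (f x - f y)) := hvsub _ _ _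
        _ ≤ max (p (a - (x : E))) (max (p (a - (x : E))) (p (a - (y : E)))) :=
            max_le_max hl (hcenters x y)
        _ ≤ p (a - (y : E)) := by
            simp only [max_le_iff]
            exact ⟨h, h, le_refl _⟩
    · right
      intro lam hl
      simp only [Set.mem_setOf_eq] at hl ⊢
      calc v (lam - f x) ≤ max (v (lam - f y)) (v (f y - f x)) := hvsub _ _ _
        _ ≤ max (p (a - (y : E))) (max (p (a - (y : E))) (p (a - (x : E)))) :=
            max_le_max hl (hcenters y x)
        _ ≤ p (a - (x : E)) := by
            simp only [max_le_iff]
            exact ⟨h, h, le_refl _⟩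
  obtain ⟨ξ, hξ⟩ := hsc B hball hchain
  have hξ' : ∀ x : F, v (ξ - f x) ≤ p (a - (x : E)) := by
    intro x
    have := hξ _ (Set.mem_range_self (f := fun x : F => {lam : K | v (lam - f x) ≤ p (a - (x : E))}) x)
    exact this
  -- extend using LinearPMap
  set fp : E →ₗ.[K] K := ⟨F, f⟩ with hfp
  have haF : a ∉ fp.domain := ha
  set g' : E →ₗ.[K] K := fp.supSpanSingleton a ξ haF with hg'
  have hdom : g'.domain = F ⊔ Submodule.span K {a} := rfl
  refine ⟨g'.toFun.comp (LinearEquiv.ofEq _ _ hdom.symm).toLinearMap, ?_, ?_⟩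
  · intro x hx
    have key := fp.supSpanSingleton_apply_mk a ξ haF x hx 0
    simp only [RingHom.id_apply, zero_smul, add_zero] at key
    have : g'.toFun ⟨x, by rw [hdom]; exact Submodule.mem_sup_left hx⟩ = f ⟨x, hx⟩ := key
    exact this
  · rintro ⟨y, hy⟩
    rw [Submodule.mem_sup] at hy
    obtain ⟨x, hx, z, hz, rfl⟩ := hy
    rw [Submodule.mem_span_singleton] at hz
    obtain ⟨c, rfl⟩ := hz
    have key := fp.supSpanSingleton_apply_mk a ξ haF x hx c
    have hval : g'.toFun.comp (LinearEquiv.ofEq _ _ hdom.symm).toLinearMap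
        ⟨x + c • a, Submodule.mem_sup.2 ⟨x, hx, c • a,
          Submodule.mem_span_singleton.2 ⟨c, rfl⟩, rfl⟩⟩ = f ⟨x, hx⟩ + c • ξ := key
    rw [hval]
    simp only [smul_eq_mul]
    rcases eq_or_ne c 0 with rfl | hc
    · simpa using hf ⟨x, hx⟩
    · have hx' : (-c⁻¹) • x ∈ F := F.smul_mem _ hx
      have hb := hξ' ⟨(-c⁻¹) • x, hx'⟩
      have hfx : f ⟨(-c⁻¹) • x, hx'⟩ = (-c⁻¹) • f ⟨x, hx⟩ := by
        rw [← f.map_smul]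
        rfl
      have heq : f ⟨x, hx⟩ + c * ξ = c * (ξ - f ⟨(-c⁻¹) • x, hx'⟩) := by
        rw [hfx]
        field_simp
        rw [smul_eq_mul, mul_sub, neg_mul, mul_neg, sub_neg_eq_add, ← mul_assoc, mul_one_div_cancel hc, one_mul, add_comm]
      rw [heq, v.map_mul]
      have := mul_le_mul_of_nonneg_left hb (le_of_lt (v.pos hc))
      calc v c * v (ξ - f ⟨(-c⁻¹) • x, hx'⟩) ≤ v c * p (a - ((-c⁻¹) • x)) := this
        _ = p (c • (a - (-c⁻¹) • x)) := (hp_smul _ _).symm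
        _ = p (x + c • a) := by
            congr 1
            rw [smul_sub, smul_smul]
            field_simp
            module
end

section
/- (Ingleton's Theorem) Let (K, |·|) be a spherically complete nonarchimedean valued field, let E be a K-vector space equipped with an ultrametric vector seminorm p, let F be a vector subspace of E, and let f : F → K be a K-linear map with |f(x)| ≤ p(x) for all x ∈ F. Then there exists a K-linear map f̃ : E → K extending f such that |f̃(x)| ≤ p(x) for all x ∈ E. -/
/-- **Ingleton's Theorem.** Let `(K, v)` be a spherically complete
nonarchimedean valued field, let `E` be a `K`-vector space equipped with an ultrametric
vector seminorm `p`, let `F` be a vector subspace of `E`, and let `f : F → K` be a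
`K`-linear map with `v (f x) ≤ p x` for all `x ∈ F`.  Then there exists a `K`-linear map
`f̃ : E → K` extending `f` such that `v (f̃ x) ≤ p x` for all `x ∈ E`. -/
theorem ingleton_theorem (K : Type u) [Field K] (v : AbsoluteValue K ℝ)
    (hna : ∀ x y : K, v (x + y) ≤ max (v x) (v y))
    (hsc : SphericallyComplete v)
    (E : Type w) [AddCommGroup E] [Module K E] (p : E → ℝ)
    (hp_smul : ∀ (c : K) (x : E), p (c • x) = v c * p x)
    (hp_ultra : ∀ x y : E, p (x + y) ≤ max (p x) (p y))
    (F : Submodule K E) (f : F →ₗ[K] K) (hf : ∀ x : F, v (f x) ≤ p x) :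
    ∃ g : E →ₗ[K] K, (∀ x : F, g (x : E) = f x) ∧ ∀ x : E, v (g x) ≤ p x := by
  classical
  have hp0 : p 0 = 0 := by simpa using hp_smul 0 0
  have hpneg : ∀ x : E, p (-x) = p x := by
    intro x; rw [← neg_one_smul K x, hp_smul]; simp
  have hpnn : ∀ x : E, 0 ≤ p x := by
    intro x
    have h := hp_ultra x (-x)
    rw [add_neg_cancel, hp0, hpneg] at h
    simpa using h
  have hpsub : ∀ x y : E, p (x - y) ≤ max (p x) (p y) := by
    intro x y
    calc p (x - y) = p (x + -y) := by rw [sub_eq_add_neg]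
      _ ≤ max (p x) (p (-y)) := hp_ultra _ _
      _ = max (p x) (p y) := by rw [hpneg]
  set S := { g : E →ₗ.[K] K | ∀ x : g.domain, v (g x) ≤ p x } with hS
  -- one-dimensional extension step
  have step : ∀ g : E →ₗ.[K] K, g ∈ S → g.domain ≠ ⊤ → ∃ g' ∈ S, g < g' := by
    intro g hg hdom
    obtain ⟨y, -, hy⟩ : ∃ y ∈ (⊤ : Submodule K E), y ∉ g.domain :=
      SetLike.exists_of_lt (lt_top_iff_ne_top.2 hdom)
    set B : Set (Set K) :=
      Set.range (fun z : g.domain => {k : K | v (k - g z) ≤ p ((z : E) - y)}) with hB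
    have key : ∀ z1 z2 : g.domain, p ((z1 : E) - y) ≤ p ((z2 : E) - y) →
        {k : K | v (k - g z1) ≤ p ((z1 : E) - y)} ⊆
          {k : K | v (k - g z2) ≤ p ((z2 : E) - y)} := by
      intro z1 z2 hr k hk
      have h1 : v (g z1 - g z2) ≤ p ((z2 : E) - y) := by
        have h2 : v (g (z1 - z2)) ≤ p ((z1 - z2 : g.domain) : E) := hg _
        rw [g.map_sub] at h2
        calc v (g z1 - g z2) ≤ p ((z1 : E) - (z2 : E)) := by
              simpa using h2
          _ = p (((z1 : E) - y) - ((z2 : E) - y)) := by congr 1; abel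
          _ ≤ max (p ((z1 : E) - y)) (p ((z2 : E) - y)) := hpsub _ _
          _ = p ((z2 : E) - y) := max_eq_right hr
      have hk' : v (k - g z1) ≤ p ((z1 : E) - y) := hk
      calc v (k - g z2) = v ((k - g z1) + (g z1 - g z2)) := by ring_nf
        _ ≤ max (v (k - g z1)) (v (g z1 - g z2)) := hna _ _
        _ ≤ p ((z2 : E) - y) := max_le (hk'.trans hr) h1
    have hball : ∀ b ∈ B, IsClosedBall v b := by
      rintro b ⟨z, rfl⟩
      exact ⟨g z, p ((z : E) - y), hpnn _, rfl⟩
    have hchain : IsChain (· ⊆ ·) B := by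
      rintro _ ⟨z1, rfl⟩ _ ⟨z2, rfl⟩ -
      rcases le_total (p ((z1 : E) - y)) (p ((z2 : E) - y)) with h | h
      · exact Or.inl (key z1 z2 h)
      · exact Or.inr (key z2 z1 h)
    obtain ⟨k, hk⟩ := hsc B hball hchain
    have hkz : ∀ z : g.domain, v (k - g z) ≤ p ((z : E) - y) := fun z =>
      hk _ ⟨z, rfl⟩
    refine ⟨g.supSpanSingleton y k hy, ?_, ?_⟩
    · rintro ⟨w, hw⟩
      rw [LinearPMap.domain_supSpanSingleton] at hw
      rcases Submodule.mem_sup.1 hw with ⟨z, hz, y', hy', rfl⟩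
      rcases Submodule.mem_span_singleton.1 hy' with ⟨c, rfl⟩
      rw [LinearPMap.supSpanSingleton_apply_mk _ _ _ _ _ hz]
      by_cases hc : c = 0
      · subst hc; simpa using hg ⟨z, hz⟩
      · set z' : g.domain := (-c⁻¹) • (⟨z, hz⟩ : g.domain) with hz'
        have h1 : v (k - g z') ≤ p ((z' : E) - y) := hkz z'
        have hgz' : g z' = (-c⁻¹) * g ⟨z, hz⟩ := by
          rw [hz', g.map_smul]; simp [smul_eq_mul]
        have e1 : g ⟨z, hz⟩ + c • k = c * (k - g z') := by
          rw [hgz', smul_eq_mul]; field_simp; ring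
        have e2 : ((z' : E) - y) = (-c⁻¹) • (z + c • y) := by
          rw [hz']
          simp [smul_add, smul_smul, inv_mul_cancel₀ hc, sub_eq_add_neg, neg_smul]
        calc v (g ⟨z, hz⟩ + c • k) = v c * v (k - g z') := by rw [e1, v.map_mul]
          _ ≤ v c * p ((z' : E) - y) := mul_le_mul_of_nonneg_left h1 (v.nonneg c)
          _ = v c * (v (-c⁻¹) * p (z + c • y)) := by rw [e2, hp_smul]
          _ = p (z + c • y) := by
              rw [v.map_neg, ← mul_assoc, ← v.map_mul, mul_inv_cancel₀ hc, v.map_one,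
                one_mul]
    · refine lt_iff_le_not_ge.2 ⟨g.left_le_sup _ _, fun H => ?_⟩
      replace H := LinearPMap.domain_mono.monotone H
      rw [LinearPMap.domain_supSpanSingleton, sup_le_iff, Submodule.span_le,
        Set.singleton_subset_iff] at H
      exact hy H.2
  -- Zorn's lemma
  have hSc : ∀ c ⊆ S, IsChain (· ≤ ·) c → ∀ y ∈ c, ∃ ub ∈ S, ∀ z ∈ c, z ≤ ub := by
    intro c hcs c_chain y hy
    have cne : c.Nonempty := ⟨y, hy⟩
    have hcd : DirectedOn (· ≤ ·) c := c_chain.directedOn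
    refine ⟨LinearPMap.sSup c hcd, ?_, fun _ ↦ LinearPMap.le_sSup hcd⟩
    rintro ⟨x, hx⟩
    have hdir : DirectedOn (· ≤ ·) (LinearPMap.domain '' c) :=
      directedOn_image.2 (hcd.mono LinearPMap.domain_mono.monotone)
    rcases (Submodule.mem_sSup_of_directed (cne.image _) hdir).1 hx with
      ⟨_, ⟨g, hgc, rfl⟩, hgx⟩
    exact le_trans
      (le_of_eq (by exact congrArg v (LinearPMap.sSup_apply hcd hgc ⟨x, hgx⟩)))
      (hcs hgc ⟨x, hgx⟩)
  obtain ⟨q, hpq, hqs, hq⟩ := zorn_le_nonempty₀ S hSc ⟨F, f⟩ hf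
  have hqtop : q.domain = ⊤ := by
    by_contra hqt
    rcases step q hqs hqt with ⟨r, hr, hqr⟩
    exact hqr.not_ge (hq hr hqr.le)
  obtain ⟨g_dom, g⟩ := q
  obtain rfl : g_dom = ⊤ := hqtop
  obtain ⟨-, hfg⟩ := hpq
  refine ⟨g.comp (LinearMap.id.codRestrict ⊤ fun _ ↦ trivial), fun x => ?_, fun x => ?_⟩
  · exact (hfg (x := x) (y := ⟨x, trivial⟩) rfl).symm
  · exact hqs ⟨x, trivial⟩
end

section
/- Let K be a field equipped with the trivial absolute value (|x| = 1 for x ≠ 0, |0| = 0). On the polynomial ring K[X], let p be the trivial norm (p(P) = 1 for P ≠ 0, p(0) = 0) and let q : K[X] → ℝ be defined by q(P) = deg(P) + 1 for P ≠ 0 and q(0) = 0. Then q is an ultrametric vector seminorm on the K-vector space K[X] with respect to the trivial absolute value, the identity map Id : (K[X], p) → (K[X], q) is continuous for the topologies induced by p and q, but Id is not bounded: there is no M ∈ ℝ such that q(P) ≤ M · p(P) for all P ∈ K[X]. -/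
open scoped Topology

/-- Let `K` be a field equipped with the trivial absolute value
(`|x| = 1` for `x ≠ 0`, `|0| = 0`).  On the polynomial ring `K[X]`, let `p` be the
trivial norm (`p P = 1` for `P ≠ 0`, `p 0 = 0`) and let `q P = deg P + 1` for `P ≠ 0`,
`q 0 = 0`.  Then `q` is an ultrametric vector seminorm on `K[X]` with respect to the
trivial absolute value, the identity map `Id : (K[X], p) → (K[X], q)` is continuous for
the topologies induced by `p` and `q`, but `Id` is not bounded: there is no `M : ℝ`
with `q P ≤ M * p P` for all `P`. -/
theorem continuous_not_bounded_example (K : Type u) [Field K]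
    (p q : Polynomial K → ℝ)
    (hp0 : p 0 = 0) (hp1 : ∀ P : Polynomial K, P ≠ 0 → p P = 1)
    (hq0 : q 0 = 0)
    (hq1 : ∀ P : Polynomial K, P ≠ 0 → q P = (P.natDegree : ℝ) + 1)
    (τp τq : TopologicalSpace (Polynomial K))
    (hτp : ∀ s : Set (Polynomial K),
      IsOpen[τp] s ↔ ∀ P ∈ s, ∃ ε > 0, {Q : Polynomial K | p (Q - P) < ε} ⊆ s)
    (hτq : ∀ s : Set (Polynomial K),
      IsOpen[τq] s ↔ ∀ P ∈ s, ∃ ε > 0, {Q : Polynomial K | q (Q - P) < ε} ⊆ s) :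
    (q 0 = 0 ∧ (∀ (c : K) (P : Polynomial K), c ≠ 0 → q (c • P) = q P) ∧
        ∀ P Q : Polynomial K, q (P + Q) ≤ max (q P) (q Q)) ∧
      Continuous[τp, τq] id ∧
      ¬ ∃ M : ℝ, ∀ P : Polynomial K, q P ≤ M * p P := by
  have hqnn : ∀ P : Polynomial K, 0 ≤ q P := by
    intro P
    by_cases h : P = 0
    · simp [h, hq0]
    · rw [hq1 P h]; positivity
  refine ⟨⟨hq0, ?_, ?_⟩, ?_, ?_⟩
  · intro c P hc
    by_cases hP : P = 0
    · simp [hP]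
    · have h1 : c • P ≠ 0 := smul_ne_zero hc hP
      rw [hq1 _ h1, hq1 _ hP, Polynomial.smul_eq_C_mul, Polynomial.natDegree_C_mul hc]
  · intro P Q
    by_cases hPQ : P + Q = 0
    · rw [hPQ, hq0]
      exact le_max_of_le_left (hqnn P)
    by_cases hP : P = 0
    · simp [hP]
    by_cases hQ : Q = 0
    · simp [hQ]
    rw [hq1 _ hPQ, hq1 _ hP, hq1 _ hQ]
    have h := Polynomial.natDegree_add_le P Q
    have h2 : ((P + Q).natDegree : ℝ) ≤ max (P.natDegree : ℝ) (Q.natDegree : ℝ) := by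
      rw [← Nat.cast_max]; exact_mod_cast h
    calc ((P + Q).natDegree : ℝ) + 1 ≤ max (P.natDegree : ℝ) (Q.natDegree : ℝ) + 1 := by
          linarith
      _ = max ((P.natDegree : ℝ) + 1) ((Q.natDegree : ℝ) + 1) :=
          (max_add_add_right _ _ _).symm
  · -- τp is discrete
    have hdisc : ∀ s : Set (Polynomial K), IsOpen[τp] s := by
      intro s
      rw [hτp]
      intro P hP
      refine ⟨1/2, by norm_num, ?_⟩
      intro Q hQ
      simp only [Set.mem_setOf_eq] at hQ
      by_cases h : Q - P = 0
      · have : Q = P := by rwa [sub_eq_zero] at h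
        rwa [this]
      · rw [hp1 _ h] at hQ; norm_num at hQ
    exact continuous_def.mpr fun s _ => hdisc _
  · rintro ⟨M, hM⟩
    set n := ⌈M⌉₊ with hn
    have hX : (Polynomial.X : Polynomial K) ^ n ≠ 0 := pow_ne_zero _ Polynomial.X_ne_zero
    have := hM (Polynomial.X ^ n)
    rw [hq1 _ hX, hp1 _ hX, Polynomial.natDegree_X_pow, mul_one] at this
    have hMn : M ≤ (n : ℝ) := Nat.le_ceil M
    linarith
end

section
/- Let (K, |·|) be a spherically complete nonarchimedean valued field and let E be a finite-dimensional K-vector space equipped with an ultrametric vector seminorm p. Then every one-dimensional vector subspace D of E has an orthocomplement in E: there is a subspace H with D ⊕ H = E such that the projection P_D : E → D along H satisfies p(P_D(x)) ≤ p(x) for all x ∈ E. -/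
section Aux

variable {K : Type*} [Field K] {E : Type*} [AddCommGroup E] [Module K E]

/-- For a nonzero vector there is a linear functional taking value 1 on it. -/
theorem aux_exists_dual_one (w : E) (hw : w ≠ 0) : ∃ f : E →ₗ[K] K, f w = 1 := by
  obtain ⟨C, hC⟩ := Submodule.exists_isCompl (Submodule.span K {w})
  refine ⟨(LinearEquiv.coord K E w hw).toLinearMap ∘ₗ
    Submodule.linearProjOfIsCompl _ _ hC, ?_⟩
  have h1 : (Submodule.span K {w}).linearProjOfIsCompl C hC w
      = (⟨w, Submodule.mem_span_singleton_self w⟩ : Submodule.span K ({w} : Set E)) :=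
    Submodule.linearProjOfIsCompl_apply_left hC ⟨w, Submodule.mem_span_singleton_self w⟩
  simp only [LinearMap.coe_comp, Function.comp_apply, h1, LinearEquiv.coe_coe]
  exact LinearEquiv.coord_self K E w hw

variable (v : AbsoluteValue K ℝ) (p : E → ℝ)

theorem aux_nonneg (hp_smul : ∀ (c : K) (x : E), p (c • x) = v c * p x)
    (hp_ultra : ∀ x y : E, p (x + y) ≤ max (p x) (p y)) (x : E) : 0 ≤ p x := by
  have h0 : p 0 = 0 := by
    have := hp_smul 0 0
    simpa using this
  have hneg : p (-x) = p x := by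
    have := hp_smul (-1) x
    simpa using this
  have := hp_ultra x (-x)
  simp only [add_neg_cancel, h0, hneg, max_self] at this
  exact this

/-- The Ingleton extension step: extend a bounded functional from `F` to `F ⊔ span {y}`. -/
theorem aux_extend
    (hna : ∀ x y : K, v (x + y) ≤ max (v x) (v y))
    (hsc : SphericallyComplete v)
    (hp_smul : ∀ (c : K) (x : E), p (c • x) = v c * p x)
    (hp_ultra : ∀ x y : E, p (x + y) ≤ max (p x) (p y))
    (e : E) (pe_pos : 0 < p e)
    (F : Submodule K E) (f : E →ₗ[K] K)
    (hF : ∀ x ∈ F, v (f x) * p e ≤ p x)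
    (y : E) (hy : y ∉ F) :
    ∃ f' : E →ₗ[K] K, (∀ x ∈ F, f' x = f x) ∧
      ∀ x ∈ F ⊔ Submodule.span K {y}, v (f' x) * p e ≤ p x := by
  have hnn := aux_nonneg v p hp_smul hp_ultra
  have hsub : ∀ a b : E, p (a - b) ≤ max (p a) (p b) := by
    intro a b
    have hneg : p (-b) = p b := by simpa using hp_smul (-1) b
    have := hp_ultra a (-b)
    rw [← sub_eq_add_neg, hneg] at this
    exact this
  -- the family of balls
  set B : Set (Set K) :=
    (fun x : E => {a : K | v (a + f x) * p e ≤ p (x + y)}) '' (F : Set E) with hB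
  have hball : ∀ b ∈ B, IsClosedBall v b := by
    rintro b ⟨x, hx, rfl⟩
    refine ⟨-f x, p (x + y) / p e, div_nonneg (hnn _) pe_pos.le, ?_⟩
    ext a
    simp only [Set.mem_setOf_eq, sub_neg_eq_add]
    rw [le_div_iff₀ pe_pos]
  have hchain : IsChain (· ⊆ ·) B := by
    rintro b1 ⟨x1, hx1, rfl⟩ b2 ⟨x2, hx2, rfl⟩ -
    -- key estimate
    have key : ∀ x1 x2 : E, x1 ∈ F → x2 ∈ F →
        p (x1 + y) ≤ p (x2 + y) →
        {a : K | v (a + f x1) * p e ≤ p (x1 + y)} ⊆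
          {a : K | v (a + f x2) * p e ≤ p (x2 + y)} := by
      intro z1 z2 hz1 hz2 hle a ha
      simp only [Set.mem_setOf_eq] at ha ⊢
      have h1 : v (f z2 - f z1) * p e ≤ p (z2 + y) := by
        have : v (f (z2 - z1)) * p e ≤ p (z2 - z1) := hF _ (sub_mem hz2 hz1)
        rw [map_sub] at this
        refine this.trans ?_
        have : p (z2 - z1) = p ((z2 + y) - (z1 + y)) := by congr 1; abel
        rw [this]
        exact (hsub _ _).trans (max_le le_rfl hle)
      have h2 : v (a + f z2) ≤ max (v (a + f z1)) (v (f z2 - f z1)) := by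
        have : a + f z2 = (a + f z1) + (f z2 - f z1) := by ring
        rw [this]; exact hna _ _
      calc v (a + f z2) * p e
          ≤ max (v (a + f z1)) (v (f z2 - f z1)) * p e := by
            exact mul_le_mul_of_nonneg_right h2 pe_pos.le
        _ = max (v (a + f z1) * p e) (v (f z2 - f z1) * p e) :=
            (max_mul_of_nonneg _ _ pe_pos.le)
        _ ≤ max (p (z1 + y)) (p (z2 + y)) := max_le_max ha h1
        _ = p (z2 + y) := max_eq_right hle
    rcases le_total (p (x1 + y)) (p (x2 + y)) with h | h
    · exact Or.inl (key x1 x2 hx1 hx2 h)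
    · exact Or.inr (key x2 x1 hx2 hx1 h)
  obtain ⟨a, ha⟩ := hsc B hball hchain
  have haF : ∀ x ∈ F, v (a + f x) * p e ≤ p (x + y) := by
    intro x hx
    exact ha _ ⟨x, hx, rfl⟩
  -- a functional vanishing on F with value 1 at y
  have hy' : (Submodule.Quotient.mk y : E ⧸ F) ≠ 0 := by
    simpa [Submodule.Quotient.mk_eq_zero] using hy
  obtain ⟨φ, hφ⟩ := aux_exists_dual_one (K := K) _ hy'
  set g : E →ₗ[K] K := φ ∘ₗ F.mkQ with hg
  have hgF : ∀ x ∈ F, g x = 0 := by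
    intro x hx
    simp only [hg, LinearMap.coe_comp, Function.comp_apply]
    rw [show F.mkQ x = 0 from (Submodule.Quotient.mk_eq_zero F).2 hx, map_zero]
  have hgy : g y = 1 := hφ
  refine ⟨f + (a - f y) • g, ?_, ?_⟩
  · intro x hx
    simp [hgF x hx]
  · intro z hz
    rw [Submodule.mem_sup] at hz
    obtain ⟨x, hx, w, hw, rfl⟩ := hz
    rw [Submodule.mem_span_singleton] at hw
    obtain ⟨c, rfl⟩ := hw
    have hfz : (f + (a - f y) • g) (x + c • y) = f x + c * a := by
      simp [hgF x hx, hgy]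
      ring
    rw [hfz]
    rcases eq_or_ne c 0 with rfl | hc
    · simpa using hF x hx
    · have hx' : c⁻¹ • x ∈ F := F.smul_mem _ hx
      have h1 : v (a + f (c⁻¹ • x)) * p e ≤ p (c⁻¹ • x + y) := haF _ hx'
      have h2 : f x + c * a = c * (a + f (c⁻¹ • x)) := by
        rw [map_smul]
        field_simp
        rw [smul_eq_mul, mul_add, ← mul_assoc, mul_one_div_cancel hc, one_mul, add_comm]
      have h3 : p (x + c • y) = v c * p (c⁻¹ • x + y) := by
        rw [← hp_smul]
        congr 1
        rw [smul_add, smul_smul, mul_inv_cancel₀ hc, one_smul]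
      rw [h2, h3, v.map_mul, mul_assoc]
      exact mul_le_mul_of_nonneg_left h1 (v.nonneg c)
end Aux

/-- Let `(K, v)` be a spherically complete nonarchimedean valued field
and let `E` be a finite-dimensional `K`-vector space equipped with an ultrametric vector
seminorm `p`.  Then every one-dimensional vector subspace `D` of `E` has an
orthocomplement in `E`: a subspace `H` with `D ⊕ H = E` such that the projection
`P_D : E → D` along `H` satisfies `p (P_D x) ≤ p x` for all `x : E`. -/
theorem one_dim_subspace_has_orthocomplement (K : Type u) [Field K]
    (v : AbsoluteValue K ℝ)
    (hna : ∀ x y : K, v (x + y) ≤ max (v x) (v y))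
    (hsc : SphericallyComplete v)
    (E : Type w) [AddCommGroup E] [Module K E] [FiniteDimensional K E] (p : E → ℝ)
    (hp_smul : ∀ (c : K) (x : E), p (c • x) = v c * p x)
    (hp_ultra : ∀ x y : E, p (x + y) ≤ max (p x) (p y))
    (D : Submodule K E) (hD : Module.finrank K D = 1) :
    ∃ (H : Submodule K E) (h : IsCompl D H),
      ∀ x : E, p (D.linearProjOfIsCompl H h x : E) ≤ p x := by
  classical
  have hnn := aux_nonneg v p hp_smul hp_ultra
  -- get a generator of D
  obtain ⟨⟨e, heD⟩, he0, hgen⟩ := finrank_eq_one_iff'.1 hD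
  have he : e ≠ 0 := by
    intro h
    exact he0 (Subtype.ext h)
  have hDspan : D = Submodule.span K {e} := by
    apply le_antisymm
    · intro x hx
      obtain ⟨c, hc⟩ := hgen ⟨x, hx⟩
      rw [Submodule.mem_span_singleton]
      exact ⟨c, congrArg Subtype.val hc⟩
    · rw [Submodule.span_le, Set.singleton_subset_iff]
      exact heD
  -- find a functional f : E →ₗ K with f e = 1 and v (f x) * p e ≤ p x everywhere
  have main : ∃ f : E →ₗ[K] K, f e = 1 ∧ ∀ x : E, v (f x) * p e ≤ p x := by
    rcases eq_or_lt_of_le (hnn e) with hpe | hpe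
    · obtain ⟨f, hf⟩ := aux_exists_dual_one (K := K) e he
      exact ⟨f, hf, fun x => by rw [← hpe, mul_zero]; exact hnn x⟩
    · -- induction on codimension
      have ind : ∀ k : ℕ, ∀ F : Submodule K E,
          Module.finrank K E ≤ Module.finrank K F + k →
          ∀ f : E →ₗ[K] K, f e = 1 → (∀ x ∈ F, v (f x) * p e ≤ p x) → e ∈ F →
          ∃ f' : E →ₗ[K] K, f' e = 1 ∧ ∀ x : E, v (f' x) * p e ≤ p x := by
        intro k
        induction k with
        | zero =>
          intro F hrk f hfe hfF _
          have : F = ⊤ := Submodule.eq_top_of_finrank_eq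
            (le_antisymm (Submodule.finrank_le F) (by simpa using hrk))
          exact ⟨f, hfe, fun x => hfF x (this ▸ Submodule.mem_top)⟩
        | succ k ih =>
          intro F hrk f hfe hfF heF
          by_cases hFtop : F = ⊤
          · exact ⟨f, hfe, fun x => hfF x (hFtop ▸ Submodule.mem_top)⟩
          · obtain ⟨y, hy⟩ : ∃ y : E, y ∉ F := by
              by_contra h
              push_neg at h
              exact hFtop (Submodule.eq_top_iff'.2 h)
            obtain ⟨f', hf'F, hf'⟩ := aux_extend v p hna hsc hp_smul hp_ultra e hpe
              F f hfF y hy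
            have hlt : F < F ⊔ Submodule.span K {y} := by
              refine lt_of_le_of_ne le_sup_left ?_
              intro hEq
              apply hy
              rw [hEq]
              exact Submodule.mem_sup_right (Submodule.mem_span_singleton_self y)
            have hrk' : Module.finrank K E ≤
                Module.finrank K ↥(F ⊔ Submodule.span K {y}) + k := by
              have := Submodule.finrank_lt_finrank_of_lt hlt
              omega
            exact ih _ hrk' f' (by rw [hf'F e heF]; exact hfe)
              (fun x hx => hf' x hx)
              (Submodule.mem_sup_left heF)
      obtain ⟨f0, hf0⟩ := aux_exists_dual_one (K := K) e he
      refine ind (Module.finrank K E) (Submodule.span K {e})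
        (le_add_self) f0 hf0 ?_ (Submodule.mem_span_singleton_self e)
      intro x hx
      rw [Submodule.mem_span_singleton] at hx
      obtain ⟨c, rfl⟩ := hx
      rw [map_smul, smul_eq_mul, v.map_mul, hf0, v.map_one, mul_one, hp_smul]
  obtain ⟨f, hfe, hf⟩ := main
  have hcompl : IsCompl D (LinearMap.ker f) := by
    constructor
    · rw [Submodule.disjoint_def]
      intro x hxD hxK
      rw [hDspan, Submodule.mem_span_singleton] at hxD
      obtain ⟨c, rfl⟩ := hxD
      have : c = 0 := by
        have := LinearMap.mem_ker.1 hxK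
        rwa [map_smul, smul_eq_mul, hfe, mul_one] at this
      simp [this]
    · rw [codisjoint_iff_le_sup]
      intro x _
      have hxd : f x • e ∈ D := hDspan ▸ Submodule.mem_span_singleton.2 ⟨f x, rfl⟩
      have hxk : x - f x • e ∈ LinearMap.ker f := by
        rw [LinearMap.mem_ker, map_sub, map_smul, smul_eq_mul, hfe, mul_one, sub_self]
      have : x = f x • e + (x - f x • e) := by abel
      rw [this]
      exact Submodule.add_mem_sup hxd hxk
  refine ⟨LinearMap.ker f, hcompl, ?_⟩
  intro x
  have hxd : f x • e ∈ D := hDspan ▸ Submodule.mem_span_singleton.2 ⟨f x, rfl⟩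
  have hxk : x - f x • e ∈ LinearMap.ker f := by
    rw [LinearMap.mem_ker, map_sub, map_smul, smul_eq_mul, hfe, mul_one, sub_self]
  have hdecomp : x = (f x • e) + (x - f x • e) := by abel
  have hproj : (D.linearProjOfIsCompl (LinearMap.ker f) hcompl x : E) = f x • e := by
    unfold Submodule.linearProjOfIsCompl
    conv_lhs => rw [hdecomp]
    rw [map_add, Submodule.projectionOnto_apply_of_mem_right hcompl hxk, add_zero,
      Submodule.linearProjOfIsCompl_apply_left hcompl ⟨f x • e, hxd⟩]
  rw [hproj, hp_smul]
  exact hf x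
end

section
/- Let (K, |·|) be a spherically complete nonarchimedean valued field. Then every finite-dimensional K-vector space E equipped with an ultrametric vector seminorm p admits a p-orthogonal basis, i.e. a basis (e_1, …, e_n) such that for every choice of scalars s_1, …, s_n ∈ K, p(s_1•e_1 + ⋯ + s_n•e_n) = max_{1 ≤ i ≤ n} p(s_i•e_i). -/
section Aux

variable {K : Type u} [Field K] (v : AbsoluteValue K ℝ)
variable {E : Type w} [AddCommGroup E] [Module K E]

/-- Basic facts about ultrametric vector seminorms. -/
theorem aux_p_zero (p : E → ℝ) (hp_smul : ∀ (c : K) (x : E), p (c • x) = v c * p x) :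
    p 0 = 0 := by
  have := hp_smul 0 0
  simpa using this

theorem aux_p_neg (p : E → ℝ) (hp_smul : ∀ (c : K) (x : E), p (c • x) = v c * p x) (x : E) :
    p (-x) = p x := by
  have := hp_smul (-1) x
  simpa using this

theorem aux_p_nonneg (p : E → ℝ) (hp_smul : ∀ (c : K) (x : E), p (c • x) = v c * p x)
    (hp_ultra : ∀ x y : E, p (x + y) ≤ max (p x) (p y)) (x : E) : 0 ≤ p x := by
  have h0 : p 0 = 0 := aux_p_zero v p hp_smul
  have := hp_ultra x (-x)
  rw [add_neg_cancel, h0, aux_p_neg v p hp_smul, max_self] at this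
  exact this

theorem aux_p_sub (p : E → ℝ) (hp_smul : ∀ (c : K) (x : E), p (c • x) = v c * p x)
    (hp_ultra : ∀ x y : E, p (x + y) ≤ max (p x) (p y)) (x y : E) :
    p (x - y) ≤ max (p x) (p y) := by
  have := hp_ultra x (-y)
  rw [aux_p_neg v p hp_smul] at this
  simpa [sub_eq_add_neg] using this

/-- The seminorm of a finite sum is at most any common bound of the terms. -/
theorem aux_p_sum_le (p : E → ℝ) (hp_smul : ∀ (c : K) (x : E), p (c • x) = v c * p x)
    (hp_ultra : ∀ x y : E, p (x + y) ≤ max (p x) (p y))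
    {ι : Type*} (s : Finset ι) (g : ι → E) (M : ℝ) (hM : 0 ≤ M)
    (h : ∀ i ∈ s, p (g i) ≤ M) : p (∑ i ∈ s, g i) ≤ M := by
  classical
  induction s using Finset.cons_induction with
  | empty => simpa [aux_p_zero v p hp_smul] using hM
  | cons a s ha ih =>
    rw [Finset.sum_cons]
    refine le_trans (hp_ultra _ _) (max_le (h a (Finset.mem_cons_self a s)) ?_)
    exact ih fun i hi => h i (Finset.mem_cons_of_mem hi)

/-- Key lemma: minimization over a line, using spherical completeness. -/
theorem aux_min_on_line (hsc : SphericallyComplete v)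
    (q : E → ℝ) (hq_smul : ∀ (c : K) (x : E), q (c • x) = v c * q x)
    (hq_ultra : ∀ x y : E, q (x + y) ≤ max (q x) (q y))
    (x y : E) : ∃ t : K, ∀ s : K, q (x - t • y) ≤ q (x - s • y) := by
  have hq0 : q 0 = 0 := aux_p_zero v q hq_smul
  have hqnn : ∀ z, 0 ≤ q z := aux_p_nonneg v q hq_smul hq_ultra
  have hqsub : ∀ z w : E, q (z - w) ≤ max (q z) (q w) := aux_p_sub v q hq_smul hq_ultra
  by_cases hy : q y = 0
  · refine ⟨0, fun s => ?_⟩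
    have h1 : q (s • y) = 0 := by rw [hq_smul, hy, mul_zero]
    have h2 : q x ≤ max (q (x - s • y)) (q (s • y)) := by
      have := hq_ultra (x - s • y) (s • y)
      simpa using this
    rw [h1, max_eq_left (hqnn _)] at h2
    simpa using h2
  · have hc : 0 < q y := lt_of_le_of_ne (hqnn y) (Ne.symm hy)
    set f : K → ℝ := fun t => q (x - t • y) with hf
    have hbdd : BddBelow (Set.range f) := ⟨0, by rintro _ ⟨t, rfl⟩; exact hqnn _⟩
    set d : ℝ := ⨅ t : K, f t with hd
    have hd0 : 0 ≤ d := le_ciInf fun t => hqnn _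
    have hdle : ∀ t, d ≤ f t := fun t => ciInf_le hbdd t
    -- decomposition identity
    have hkey : ∀ t t0 : K, x - t • y = (x - t0 • y) + (t0 - t) • y := by
      intro t t0; rw [sub_smul]; abel
    set B : Set (Set K) := {S | ∃ r : ℝ, d < r ∧ S = {t : K | f t ≤ r}} with hB
    have hball : ∀ S ∈ B, IsClosedBall v S := by
      rintro S ⟨r, hr, rfl⟩
      obtain ⟨t0, ht0⟩ : ∃ t0, f t0 < r := exists_lt_of_ciInf_lt hr
      refine ⟨t0, r / q y, le_of_lt (div_pos (lt_of_le_of_lt hd0 hr) hc), ?_⟩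
      ext t
      simp only [Set.mem_setOf_eq]
      constructor
      · intro ht
        have h1 : q ((t - t0) • y) ≤ max (f t0) (f t) := by
          have : (t - t0) • y = (x - t0 • y) - (x - t • y) := by rw [sub_smul]; abel
          rw [this]
          exact hqsub _ _
        have h2 : v (t - t0) * q y ≤ r := by
          rw [← hq_smul]
          exact le_trans h1 (max_le (le_of_lt ht0) ht)
        exact (le_div_iff₀ hc).mpr h2
      · intro ht
        rw [hf]
        calc q (x - t • y) = q ((x - t0 • y) + (t0 - t) • y) := by rw [← hkey]
          _ ≤ max (q (x - t0 • y)) (q ((t0 - t) • y)) := hq_ultra _ _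
          _ ≤ r := by
              refine max_le (le_of_lt ht0) ?_
              rw [hq_smul]
              have hv : v (t0 - t) = v (t - t0) := v.map_sub _ _
              rw [hv]
              calc v (t - t0) * q y ≤ (r / q y) * q y :=
                    mul_le_mul_of_nonneg_right ht (le_of_lt hc)
                _ = r := div_mul_cancel₀ r (ne_of_gt hc)
    have hchain : IsChain (· ⊆ ·) B := by
      rintro S1 ⟨r1, hr1, rfl⟩ S2 ⟨r2, hr2, rfl⟩ _
      rcases le_total r1 r2 with h | h
      · left; intro t ht; exact le_trans ht h
      · right; intro t ht; exact le_trans ht h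
    obtain ⟨t, ht⟩ := hsc B hball hchain
    have hft : ∀ r, d < r → f t ≤ r := by
      intro r hr
      exact ht {s : K | f s ≤ r} ⟨r, hr, rfl⟩
    have hftd : f t ≤ d := by
      by_contra h
      push_neg at h
      obtain ⟨r, hr1, hr2⟩ := exists_between h
      exact absurd (hft r hr1) (not_le.mpr hr2)
    exact ⟨t, fun s => le_trans hftd (hdle s)⟩

/-- Best approximation in a finitely generated subspace is attained. -/
theorem aux_best_approx (hsc : SphericallyComplete v)
    (p : E → ℝ) (hp_smul : ∀ (c : K) (x : E), p (c • x) = v c * p x)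
    (hp_ultra : ∀ x y : E, p (x + y) ≤ max (p x) (p y)) :
    ∀ (m : ℕ) (g : Fin m → E) (x : E),
      ∃ a ∈ Submodule.span K (Set.range g), ∀ b ∈ Submodule.span K (Set.range g),
        p (x - a) ≤ p (x - b) := by
  intro m
  induction m with
  | zero =>
    intro g x
    refine ⟨0, Submodule.zero_mem _, fun b hb => ?_⟩
    rw [Set.range_eq_empty g, Submodule.span_empty, Submodule.mem_bot] at hb
    subst hb
    exact le_refl _
  | succ n ih =>
    intro g x
    have hpnn : ∀ z, 0 ≤ p z := aux_p_nonneg v p hp_smul hp_ultra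
    set F' : Submodule K E := Submodule.span K (Set.range (Fin.tail g)) with hF'
    have hIH : ∀ z : E, ∃ a ∈ F', ∀ b ∈ F', p (z - a) ≤ p (z - b) := ih (Fin.tail g)
    choose A hAmem hAmin using hIH
    set q : E → ℝ := fun z => p (z - A z) with hq
    have hqle : ∀ z b, b ∈ F' → q z ≤ p (z - b) := fun z b hb => hAmin z b hb
    have hqnn : ∀ z, 0 ≤ q z := fun z => hpnn _
    have hq_smul : ∀ (c : K) (z : E), q (c • z) = v c * q z := by
      intro c z
      rcases eq_or_ne c 0 with rfl | hc
      · simp only [zero_smul, map_zero, zero_mul]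
        refine le_antisymm ?_ (hqnn 0)
        have := hqle 0 0 (Submodule.zero_mem _)
        simpa [aux_p_zero v p hp_smul] using this
      · refine le_antisymm ?_ ?_
        · have h1 : q (c • z) ≤ p (c • z - c • A z) :=
            hqle _ _ (Submodule.smul_mem _ c (hAmem z))
          calc q (c • z) ≤ p (c • z - c • A z) := h1
            _ = p (c • (z - A z)) := by rw [smul_sub]
            _ = v c * q z := by rw [hp_smul]
        · have h1 : q z ≤ p (z - c⁻¹ • A (c • z)) :=
            hqle _ _ (Submodule.smul_mem _ c⁻¹ (hAmem (c • z)))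
          have h2 : p (z - c⁻¹ • A (c • z)) = v c⁻¹ * q (c • z) := by
            have : z - c⁻¹ • A (c • z) = c⁻¹ • (c • z - A (c • z)) := by
              rw [smul_sub, inv_smul_smul₀ hc]
            rw [this, hp_smul]
          have h3 : v c * q z ≤ v c * (v c⁻¹ * q (c • z)) :=
            mul_le_mul_of_nonneg_left (h2 ▸ h1) (v.nonneg c)
          calc v c * q z ≤ v c * (v c⁻¹ * q (c • z)) := h3
            _ = v (c * c⁻¹) * q (c • z) := by rw [v.map_mul, mul_assoc]
            _ = q (c • z) := by rw [mul_inv_cancel₀ hc, v.map_one, one_mul]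
    have hq_ultra : ∀ z w : E, q (z + w) ≤ max (q z) (q w) := by
      intro z w
      have h1 : q (z + w) ≤ p (z + w - (A z + A w)) :=
        hqle _ _ (Submodule.add_mem _ (hAmem z) (hAmem w))
      have h2 : z + w - (A z + A w) = (z - A z) + (w - A w) := by abel
      rw [h2] at h1
      exact le_trans h1 (hp_ultra _ _)
    obtain ⟨t, hmin⟩ := aux_min_on_line v hsc q hq_smul hq_ultra x (g 0)
    set a : E := t • g 0 + A (x - t • g 0) with ha
    have hrange : Set.range g = insert (g 0) (Set.range (Fin.tail g)) := by
      conv_lhs => rw [← Fin.cons_self_tail g]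
      exact Fin.range_cons _ _
    have hspan : Submodule.span K (Set.range g) = Submodule.span K {g 0} ⊔ F' := by
      rw [hrange, Submodule.span_insert]
    have hg0 : g 0 ∈ Submodule.span K (Set.range g) :=
      Submodule.subset_span ⟨0, rfl⟩
    have hF'le : F' ≤ Submodule.span K (Set.range g) := by
      rw [hspan]; exact le_sup_right
    refine ⟨a, ?_, ?_⟩
    · exact Submodule.add_mem _ (Submodule.smul_mem _ t hg0) (hF'le (hAmem _))
    · intro b hb
      rw [hspan] at hb
      obtain ⟨u, hu, w, hw, rfl⟩ := Submodule.mem_sup.mp hb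
      obtain ⟨s, rfl⟩ := Submodule.mem_span_singleton.mp hu
      have h1 : x - a = (x - t • g 0) - A (x - t • g 0) := by rw [ha]; abel
      have h2 : x - (s • g 0 + w) = (x - s • g 0) - w := by abel
      rw [h1, h2]
      calc p ((x - t • g 0) - A (x - t • g 0)) = q (x - t • g 0) := rfl
        _ ≤ q (x - s • g 0) := hmin s
        _ ≤ p ((x - s • g 0) - w) := hqle _ _ hw

end Aux

/-- Let `(K, v)` be a spherically complete nonarchimedean valued field.
Then every finite-dimensional `K`-vector space `E` equipped with an ultrametric vector
seminorm `p` admits a `p`-orthogonal basis: a basis `(e 1, …, e n)` such that for all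
scalars `s 1, …, s n`, `p (∑ i, s i • e i) = max_i p (s i • e i)` (the maximum being
expressed as a supremum over `Fin n`). -/
theorem exists_orthogonal_basis (K : Type u) [Field K]
    (v : AbsoluteValue K ℝ)
    (hna : ∀ x y : K, v (x + y) ≤ max (v x) (v y))
    (hsc : SphericallyComplete v)
    (E : Type w) [AddCommGroup E] [Module K E] [FiniteDimensional K E] (p : E → ℝ)
    (hp_smul : ∀ (c : K) (x : E), p (c • x) = v c * p x)
    (hp_ultra : ∀ x y : E, p (x + y) ≤ max (p x) (p y)) :
    ∃ (n : ℕ) (b : Module.Basis (Fin n) K E),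
      ∀ s : Fin n → K, p (∑ i, s i • b i) = ⨆ i, p (s i • b i) := by
  classical
  have hpnn : ∀ z, 0 ≤ p z := aux_p_nonneg v p hp_smul hp_ultra
  have hp0 : p 0 = 0 := aux_p_zero v p hp_smul
  -- main claim: every finitely generated subspace has an orthogonal basis family
  have main : ∀ (m : ℕ) (g : Fin m → E), ∃ (j : ℕ) (e : Fin j → E),
      Submodule.span K (Set.range e) = Submodule.span K (Set.range g) ∧
      LinearIndependent K e ∧
      (∀ (s : Fin j → K) (i : Fin j), p (s i • e i) ≤ p (∑ k, s k • e k)) := by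
    intro m
    induction m with
    | zero =>
      intro g
      refine ⟨0, Fin.elim0, ?_, linearIndependent_empty_type, fun s i => i.elim0⟩
      rw [Set.range_eq_empty g, Set.range_eq_empty Fin.elim0]
    | succ n ih =>
      intro g
      obtain ⟨j, e, hspan, hli, horth⟩ := ih (Fin.tail g)
      set F : Submodule K E := Submodule.span K (Set.range (Fin.tail g)) with hF
      have hrange : Set.range g = insert (g 0) (Set.range (Fin.tail g)) := by
        conv_lhs => rw [← Fin.cons_self_tail g]
        exact Fin.range_cons _ _
      have hspan_g : Submodule.span K (Set.range g) = Submodule.span K {g 0} ⊔ F := by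
        rw [hrange, Submodule.span_insert]
      by_cases hx : g 0 ∈ F
      · refine ⟨j, e, ?_, hli, horth⟩
        rw [hspan, hspan_g]
        rw [sup_eq_right.mpr]
        rw [Submodule.span_le, Set.singleton_subset_iff]
        exact hx
      · -- orthogonalize: subtract best approximation
        obtain ⟨a, haF, hamin⟩ :=
          aux_best_approx v hsc p hp_smul hp_ultra j e (g 0)
        rw [hspan] at haF hamin
        set y : E := g 0 - a with hy
        have hyF : y ∉ F := fun h => hx (by
          have : g 0 = y + a := by rw [hy]; abel
          rw [this]; exact Submodule.add_mem _ h haF)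
        have hli' : LinearIndependent K (Fin.cons y e : Fin (j + 1) → E) :=
          hli.fin_cons (by rw [hspan]; exact hyF)
        refine ⟨j + 1, Fin.cons y e, ?_, hli', ?_⟩
        · -- span
          rw [Fin.range_cons, Submodule.span_insert, hspan, hspan_g]
          refine le_antisymm (sup_le ?_ le_sup_right) (sup_le ?_ le_sup_right)
          · rw [Submodule.span_le, Set.singleton_subset_iff]
            have : y = g 0 - a := rfl
            rw [this]
            refine Submodule.sub_mem _ ?_ ?_
            · exact le_sup_left (α := Submodule K E)
                (Submodule.mem_span_singleton_self (g 0))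
            · exact le_sup_right (α := Submodule K E) haF
          · rw [Submodule.span_le, Set.singleton_subset_iff]
            have hg0 : g 0 = y + a := by rw [hy]; abel
            rw [hg0]
            refine Submodule.add_mem _ ?_ ?_
            · exact le_sup_left (α := Submodule K E)
                (Submodule.mem_span_singleton_self y)
            · exact le_sup_right (α := Submodule K E) haF
        · -- orthogonality
          intro s i
          set w : E := ∑ k : Fin j, s k.succ • e k with hw
          have hwF : w ∈ F := by
            rw [← hspan]
            exact Submodule.sum_mem _ fun k _ =>
              Submodule.smul_mem _ _ (Submodule.subset_span ⟨k, rfl⟩)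
          have hsum : ∑ k : Fin (j+1), s k • Fin.cons y e k = s 0 • y + w := by
            rw [Fin.sum_univ_succ]
            simp [hw]
          rw [hsum]
          -- first, p (s 0 • y) ≤ p (s 0 • y + w)
          have hkey : p (s 0 • y) ≤ p (s 0 • y + w) := by
            rcases eq_or_ne (s 0) 0 with h0 | h0
            · rw [h0, zero_smul, hp0]
              exact hpnn _
            · have hdecomp : s 0 • y + w = s 0 • (g 0 - (a - (s 0)⁻¹ • w)) := by
                simp only [hy, smul_sub, smul_inv_smul₀ h0]
                abel
              have hmem : a - (s 0)⁻¹ • w ∈ F :=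
                Submodule.sub_mem _ haF (Submodule.smul_mem _ _ hwF)
              rw [hdecomp, hp_smul, hp_smul]
              exact mul_le_mul_of_nonneg_left (hamin _ hmem) (v.nonneg _)
          have hkeyw : p w ≤ p (s 0 • y + w) := by
            have h2 := aux_p_sub v p hp_smul hp_ultra (s 0 • y + w) (s 0 • y)
            have h3 : s 0 • y + w - s 0 • y = w := by abel
            rw [h3] at h2
            exact h2.trans (max_le (le_refl _) hkey)
          induction i using Fin.cases with
          | zero => simpa using hkey
          | succ k =>
            have hk : p (s k.succ • e k) ≤ p w := horth (fun k => s k.succ) k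
            simpa using hk.trans hkeyw
  -- apply to a finite basis of E
  obtain ⟨j, e, hspan, hli, horth⟩ := main (Module.finrank K E) (Module.finBasis K E)
  have htop : Submodule.span K (Set.range e) = ⊤ := by
    rw [hspan, Module.Basis.span_eq]
  refine ⟨j, Module.Basis.mk hli (le_of_eq htop.symm), fun s => ?_⟩
  have hb : ∀ i, (Module.Basis.mk hli (le_of_eq htop.symm)) i = e i := fun i => Module.Basis.mk_apply _ _ i
  simp only [hb]
  rcases isEmpty_or_nonempty (Fin j) with he | hne
  · rw [Real.iSup_of_isEmpty]
    rw [Finset.univ_eq_empty, Finset.sum_empty, hp0]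
  · refine le_antisymm ?_ ?_
    · obtain ⟨i0, hi0⟩ := Finite.exists_max (fun i => p (s i • e i))
      refine le_trans ?_ (le_ciSup (Set.Finite.bddAbove (Set.finite_range _)) i0)
      exact aux_p_sum_le v p hp_smul hp_ultra Finset.univ _ _ (hpnn _)
        (fun i _ => hi0 i)
    · exact ciSup_le fun i => horth s i
end

section
/- Let (K, |·|) be a spherically complete nonarchimedean valued field. Then Ingleton's statement I_(K,|·|) is equivalent to the isometric linear extender statement LE_(K,|·|): for every K-vector space E equipped with an ultrametric vector seminorm p and every vector subspace F of E, there exists a K-linear map T : BL(F,K) → BL(E,K) such that for every bounded linear form f on F, T(f) extends f and ‖T(f)‖ = ‖f‖. -/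
variable {K : Type u} [Field K] (v : AbsoluteValue K ℝ)

/-- The space `BL(E, K)` of bounded linear forms on a seminormed `K`-vector space
`(E, p)`, i.e. the linear forms `f : E → K` for which there exists `M : ℝ` with
`v (f x) ≤ M * p x` for all `x`. -/
def BddLin (E : Type u) [AddCommGroup E] [Module K E] (p : E → ℝ) :
    Submodule K (E →ₗ[K] K) where
  carrier := {f | ∃ M : ℝ, ∀ x : E, v (f x) ≤ M * p x}
  zero_mem' := ⟨0, fun x => by simp⟩
  add_mem' := by
    rintro f g ⟨M, hM⟩ ⟨N, hN⟩
    refine ⟨M + N, fun x => ?_⟩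
    have h1 := hM x
    have h2 := hN x
    simp only [LinearMap.add_apply]
    calc v (f x + g x) ≤ v (f x) + v (g x) := v.add_le _ _
      _ ≤ (M + N) * p x := by ring_nf; linarith
  smul_mem' := by
    rintro c f ⟨M, hM⟩
    refine ⟨v c * M, fun x => ?_⟩
    simp only [LinearMap.smul_apply, smul_eq_mul, map_mul]
    calc v c * v (f x) ≤ v c * (M * p x) :=
          mul_le_mul_of_nonneg_left (hM x) (v.nonneg c)
      _ = v c * M * p x := by ring

/-- The operator seminorm of a bounded linear form on `(E, p)`:
`‖f‖ = inf {M ≥ 0 | ∀ x, v (f x) ≤ M * p x}`. -/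
noncomputable def opSemin (E : Type u) [AddCommGroup E] [Module K E] (p : E → ℝ)
    (f : E →ₗ[K] K) : ℝ :=
  sInf {M : ℝ | 0 ≤ M ∧ ∀ x : E, v (f x) ≤ M * p x}

section Aux

theorem absv_sum_le (hna : ∀ x y : K, v (x + y) ≤ max (v x) (v y))
    {ι : Type*} (s : Finset ι) (a : ι → K) {r : ℝ} (hr : 0 ≤ r)
    (h : ∀ i ∈ s, v (a i) ≤ r) : v (∑ i ∈ s, a i) ≤ r := by
  classical
  induction s using Finset.induction_on with
  | empty => simpa using hr
  | insert _ _ hx ih =>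
      rename_i b s' _
      rw [Finset.sum_insert hx]
      exact le_trans (hna _ _) (max_le (h _ (Finset.mem_insert_self _ _))
        (ih fun i hi => h i (Finset.mem_insert_of_mem hi)))

variable {E : Type u} [AddCommGroup E] [Module K E] {p : E → ℝ}

theorem p_zero (hp1 : ∀ (c : K) (x : E), p (c • x) = v c * p x) : p 0 = 0 := by
  have := hp1 0 0
  simpa using this

theorem p_nonneg (hp1 : ∀ (c : K) (x : E), p (c • x) = v c * p x)
    (hp2 : ∀ x y : E, p (x + y) ≤ max (p x) (p y)) (x : E) : 0 ≤ p x := by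
  have h1 : p (-x) = p x := by
    have := hp1 (-1) x
    simpa using this
  have h0 : p (x + -x) ≤ max (p x) (p (-x)) := hp2 _ _
  rw [add_neg_cancel, h1, max_self, p_zero v hp1] at h0
  exact h0

theorem opSemin_spec (hp1 : ∀ (c : K) (x : E), p (c • x) = v c * p x)
    (hp2 : ∀ x y : E, p (x + y) ≤ max (p x) (p y)) {f : E →ₗ[K] K}
    (hf : f ∈ BddLin v E p) :
    0 ≤ opSemin v E p f ∧ ∀ x : E, v (f x) ≤ opSemin v E p f * p x := by
  obtain ⟨M, hM⟩ := hf
  have hmem : max M 0 ∈ {M : ℝ | 0 ≤ M ∧ ∀ x : E, v (f x) ≤ M * p x} :=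
    ⟨le_max_right _ _, fun x => le_trans (hM x)
      (mul_le_mul_of_nonneg_right (le_max_left _ _) (p_nonneg v hp1 hp2 x))⟩
  have hne : {M : ℝ | 0 ≤ M ∧ ∀ x : E, v (f x) ≤ M * p x}.Nonempty := ⟨_, hmem⟩
  have h0 : 0 ≤ opSemin v E p f := le_csInf hne fun r hr => hr.1
  refine ⟨h0, fun x => ?_⟩
  rcases eq_or_lt_of_le (p_nonneg v hp1 hp2 x) with h | h
  · have := hmem.2 x
    rw [← h, mul_zero] at this ⊢
    exact this
  · have hlb : v (f x) / p x ≤ opSemin v E p f :=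
      le_csInf hne fun r hr => (div_le_iff₀ h).2 (hr.2 x)
    exact (div_le_iff₀ h).1 hlb

theorem opSemin_le {f : E →ₗ[K] K} {M : ℝ} (hM0 : 0 ≤ M)
    (hM : ∀ x : E, v (f x) ≤ M * p x) : opSemin v E p f ≤ M :=
  csInf_le ⟨0, fun r hr => hr.1⟩ ⟨hM0, hM⟩

theorem sum_tmul_eq_zero {M N : Type*} [AddCommGroup M] [Module K M]
    [AddCommGroup N] [Module K N] {ι : Type*} [Fintype ι] [DecidableEq ι]
    {f : ι → M} (hf : LinearIndependent K f) {y : ι → N}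
    (h : (∑ i, f i ⊗ₜ[K] y i) = 0) (i₀ : ι) : y i₀ = 0 := by
  classical
  set S := Submodule.span K (f '' {i : ι | i ≠ i₀}) with hS
  have hns : f i₀ ∉ S := hf.notMem_span_image (by simp)
  have hq : S.mkQ (f i₀) ≠ 0 := by
    rw [Submodule.mkQ_apply, ne_eq, Submodule.Quotient.mk_eq_zero]
    exact hns
  obtain ⟨ψ, hψ⟩ : ∃ ψ : (M ⧸ S) →ₗ[K] K, ψ (S.mkQ (f i₀)) ≠ 0 := by
    by_contra hc
    push_neg at hc
    exact hq ((Module.forall_dual_apply_eq_zero_iff K _).1 hc)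
  set φ : M →ₗ[K] K := ψ.comp S.mkQ with hφ
  have hφ0 : ∀ i, i ≠ i₀ → φ (f i) = 0 := by
    intro i hi
    have hmem : f i ∈ S := Submodule.subset_span ⟨i, hi, rfl⟩
    have : S.mkQ (f i) = 0 := by
      rw [Submodule.mkQ_apply, Submodule.Quotient.mk_eq_zero]
      exact hmem
    simp [hφ, this]
  have happ := congrArg (fun z => (TensorProduct.lid K N) (LinearMap.rTensor N φ z)) h
  simp only [map_sum, LinearMap.rTensor_tmul, TensorProduct.lid_tmul, map_zero] at happ
  rw [Finset.sum_eq_single i₀ (fun i _ hi => by rw [hφ0 i hi, zero_smul])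
    (fun hni => absurd (Finset.mem_univ i₀) hni)] at happ
  exact (smul_eq_zero.1 happ).resolve_left hψ

end Aux

set_option maxHeartbeats 4000000 in
set_option synthInstance.maxHeartbeats 1000000 in
/-- Let `(K, v)` be a spherically complete nonarchimedean valued field.
Then Ingleton's statement `I_(K,v)` is equivalent to the isometric linear extender
statement `LE_(K,v)`: for every `K`-vector space `E` equipped with an ultrametric vector
seminorm `p` and every vector subspace `F` of `E`, there exists a `K`-linear map
`T : BL(F,K) → BL(E,K)` such that, for every bounded linear form `f` on `F`, `T f`
extends `f` and `‖T f‖ = ‖f‖`. -/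
theorem ingleton_iff_isometric_linear_extender (K : Type u) [Field K]
    (v : AbsoluteValue K ℝ)
    (hna : ∀ x y : K, v (x + y) ≤ max (v x) (v y))
    (hsc : SphericallyComplete v) :
    (∀ (E : Type u) [AddCommGroup E] [Module K E] (p : E → ℝ),
        (∀ (c : K) (x : E), p (c • x) = v c * p x) →
        (∀ x y : E, p (x + y) ≤ max (p x) (p y)) →
        ∀ (F : Submodule K E) (f : F →ₗ[K] K), (∀ x : F, v (f x) ≤ p (x : E)) →
          ∃ g : E →ₗ[K] K, (∀ x : F, g (x : E) = f x) ∧ ∀ x : E, v (g x) ≤ p x) ↔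
      (∀ (E : Type u) [AddCommGroup E] [Module K E] (p : E → ℝ),
        (∀ (c : K) (x : E), p (c • x) = v c * p x) →
        (∀ x y : E, p (x + y) ≤ max (p x) (p y)) →
        ∀ F : Submodule K E,
          ∃ T : ↥(BddLin v ↥F (fun x : ↥F => p (x : E))) →ₗ[K] ↥(BddLin v E p),
            ∀ f : ↥(BddLin v ↥F (fun x : ↥F => p (x : E))),
              (∀ x : ↥F, (↑(T f) : E →ₗ[K] K) (x : E) = (↑f : ↥F →ₗ[K] K) x) ∧
                opSemin v E p ↑(T f) =
                  opSemin v ↥F (fun x : ↥F => p (x : E)) ↑f) := by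
  clear hsc
  constructor
  · -- Ingleton implies linear extender
    intro hI E _ _ p hp1 hp2 F
    classical
    have hp1F : ∀ (c : K) (x : ↥F), p ((c • x : ↥F) : E) = v c * p (x : E) := by
      intro c x
      exact hp1 c (x : E)
    have hp2F : ∀ x y : ↥F, p ((x + y : ↥F) : E) ≤ max (p (x : E)) (p (y : E)) :=
      fun x y => hp2 (x : E) (y : E)
    set pF : ↥F → ℝ := fun x : ↥F => p (x : E) with hpFdef
    set L := ↥(BddLin v ↥F pF) with hLdef
    letI : AddCommGroup L := Submodule.addCommGroup _
    set nrm : (↥F →ₗ[K] K) → ℝ := opSemin v ↥F pF with hnrmdef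
    -- basic facts about nrm
    have hnrm_spec : ∀ f : L, 0 ≤ nrm ↑f ∧ ∀ y : ↥F, v ((f : ↥F →ₗ[K] K) y) ≤ nrm ↑f * pF y :=
      fun f => opSemin_spec v hp1F hp2F f.2
    -- tensor product setup
    let j : TensorProduct K L ↥F →ₗ[K] TensorProduct K L E := LinearMap.lTensor L F.subtype
    have hjinj : Function.Injective j :=
      haveI : Module.Free K L := Module.Free.of_divisionRing K L
      haveI : Module.Flat K L := Module.Flat.of_free
      Module.Flat.lTensor_preserves_injective_linearMap _ F.injective_subtype
    let ψ : TensorProduct K L ↥F →ₗ[K] K := TensorProduct.lift (BddLin v ↥F pF).subtype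
    -- the projective seminorm data
    set S : TensorProduct K L E → Set ℝ := fun z => {r : ℝ | 0 ≤ r ∧ ∃ (n : ℕ) (g : Fin n → L) (x : Fin n → E),
      z = ∑ i, (g i) ⊗ₜ[K] (x i) ∧ ∀ i, nrm ↑(g i) * p (x i) ≤ r} with hSdef
    have hcomb : ∀ (z w : TensorProduct K L E) (r r' : ℝ), r ∈ S z → r' ∈ S w → max r r' ∈ S (z + w) := by
      rintro z w r r' ⟨hr0, n, g, x, hrep, hbd⟩ ⟨hr0', n', g', x', hrep', hbd'⟩
      refine ⟨le_trans hr0 (le_max_left _ _), n + n', Fin.addCases g g', Fin.addCases x x', ?_, ?_⟩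
      · rw [Fin.sum_univ_add]
        simp only [Fin.addCases_left, Fin.addCases_right]
        rw [← hrep, ← hrep']
      · intro i
        refine Fin.addCases (fun i => ?_) (fun i => ?_) i
        · simp only [Fin.addCases_left]
          exact le_trans (hbd i) (le_max_left _ _)
        · simp only [Fin.addCases_right]
          exact le_trans (hbd' i) (le_max_right _ _)
    have hSne : ∀ z : TensorProduct K L E, (S z).Nonempty := by
      intro z
      induction z using TensorProduct.induction_on with
      | zero =>
          exact ⟨0, le_refl 0, 0, Fin.elim0, Fin.elim0, by simp, fun i => i.elim0⟩
      | tmul f x =>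
          refine ⟨nrm ↑f * p x, mul_nonneg (hnrm_spec f).1 (p_nonneg v hp1 hp2 x), 1,
            fun _ => f, fun _ => x, by simp, fun i => le_refl _⟩
      | add z w hz hw =>
          obtain ⟨r, hr⟩ := hz
          obtain ⟨r', hr'⟩ := hw
          exact ⟨max r r', hcomb z w r r' hr hr'⟩
    have hSbdd : ∀ z : TensorProduct K L E, BddBelow (S z) := fun z => ⟨0, fun r hr => hr.1⟩
    set q : TensorProduct K L E → ℝ := fun z => sInf (S z) with hqdef
    have hq0 : ∀ z, 0 ≤ q z := fun z => le_csInf (hSne z) fun r hr => hr.1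
    have hqle : ∀ z r, r ∈ S z → q z ≤ r := fun z r hr => csInf_le (hSbdd z) hr
    have hqtmul : ∀ (f : L) (x : E), q (f ⊗ₜ[K] x) ≤ nrm ↑f * p x := by
      intro f x
      exact hqle _ _ ⟨mul_nonneg (hnrm_spec f).1 (p_nonneg v hp1 hp2 x), 1,
        fun _ => f, fun _ => x, by simp, fun i => le_refl _⟩
    have hq00 : q 0 = 0 :=
      le_antisymm (hqle 0 0 ⟨le_refl 0, 0, Fin.elim0, Fin.elim0, by simp, fun i => i.elim0⟩) (hq0 0)
    -- smul inequality
    have hsmul_le : ∀ (c : K) (z : TensorProduct K L E), q (c • z) ≤ v c * q z := by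
      intro c z
      have step : ∀ r ∈ S z, q (c • z) ≤ v c * r := by
        rintro r ⟨hr0, n, g, x, hrep, hbd⟩
        refine hqle _ _ ⟨mul_nonneg (v.nonneg c) hr0, n, fun i => c • g i, x, ?_, ?_⟩
        · rw [hrep, Finset.smul_sum]
          exact Finset.sum_congr rfl fun i _ => (TensorProduct.smul_tmul' c _ _).symm
        · intro i
          have h1 : nrm ↑(c • g i) ≤ v c * nrm ↑(g i) := by
            refine opSemin_le v (mul_nonneg (v.nonneg c) (hnrm_spec (g i)).1) fun y => ?_
            have hy : (((c • g i : L) : ↥F →ₗ[K] K)) y = c * ((g i : ↥F →ₗ[K] K) y) := rfl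
            rw [hy, v.map_mul, mul_assoc]
            exact mul_le_mul_of_nonneg_left ((hnrm_spec (g i)).2 y) (v.nonneg c)
          calc nrm ↑(c • g i) * p (x i) ≤ (v c * nrm ↑(g i)) * p (x i) :=
                mul_le_mul_of_nonneg_right h1 (p_nonneg v hp1 hp2 (x i))
            _ = v c * (nrm ↑(g i) * p (x i)) := by ring
            _ ≤ v c * r := mul_le_mul_of_nonneg_left (hbd i) (v.nonneg c)
      rcases eq_or_lt_of_le (v.nonneg c) with hv0 | hv0
      · obtain ⟨r₀, hr₀⟩ := hSne z
        have := step r₀ hr₀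
        rw [← hv0, zero_mul] at this ⊢
        exact this
      · have hlb : q (c • z) / v c ≤ q z :=
          le_csInf (hSne z) fun r hr => (div_le_iff₀ hv0).2 (by rw [mul_comm]; exact step r hr)
        rw [div_le_iff₀ hv0] at hlb
        calc q (c • z) ≤ q z * v c := hlb
          _ = v c * q z := mul_comm _ _
    have hq_smul : ∀ (c : K) (z : TensorProduct K L E), q (c • z) = v c * q z := by
      intro c z
      rcases eq_or_ne c 0 with rfl | hc
      · rw [zero_smul, hq00, map_zero, zero_mul]
      · have h1 := hsmul_le c z
        have h2 := hsmul_le c⁻¹ (c • z)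
        rw [smul_smul, inv_mul_cancel₀ hc, one_smul] at h2
        have hvc : v c ≠ 0 := (v.pos hc).ne'
        rw [map_inv₀] at h2
        have h3 := mul_le_mul_of_nonneg_left h2 (v.nonneg c)
        rw [← mul_assoc, mul_inv_cancel₀ hvc, one_mul] at h3
        exact le_antisymm h1 h3
    have hq_add : ∀ z w : TensorProduct K L E, q (z + w) ≤ max (q z) (q w) := by
      intro z w
      by_contra hlt
      push_neg at hlt
      obtain ⟨r, hrS, hr⟩ := exists_lt_of_csInf_lt (hSne z)
        (lt_of_le_of_lt (le_max_left (q z) (q w)) hlt)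
      obtain ⟨r', hrS', hr'⟩ := exists_lt_of_csInf_lt (hSne w)
        (lt_of_le_of_lt (le_max_right (q z) (q w)) hlt)
      exact absurd (hqle _ _ (hcomb z w r r' hrS hrS')) (not_le.2 (max_lt hr hr'))
    -- key lemma: any representation of an element of the range of `j` bounds `v (ψ w)`
    have keyA : ∀ (n : ℕ) (g : Fin n → L) (x : Fin n → E) (w : TensorProduct K L ↥F) (r : ℝ),
        0 ≤ r → (∀ i, nrm ↑(g i) * p (x i) ≤ r) → j w = ∑ i, (g i) ⊗ₜ[K] (x i) →
        v (ψ w) ≤ r := by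
      intro n
      induction n with
      | zero =>
          intro g x w r hr0 hbd hrep
          have hw0 : w = 0 := by
            apply hjinj
            rw [hrep, map_zero]
            simp
          rw [hw0, map_zero, v.map_zero]
          exact hr0
      | succ m ih =>
          intro g x w r hr0 hbd hrep
          by_cases hli : LinearIndependent K g
          · -- independent case: all the `x i` lie in `F`
            have hcomp : (LinearMap.lTensor L F.mkQ).comp j = 0 := by
              rw [show j = LinearMap.lTensor L F.subtype from rfl, ← LinearMap.lTensor_comp]
              have h0 : F.mkQ.comp F.subtype = 0 := by
                ext y
                simp [Submodule.Quotient.mk_eq_zero]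
              rw [h0, LinearMap.lTensor_zero]
            have hmem : ∀ i, x i ∈ F := by
              intro i
              have h1 := LinearMap.congr_fun hcomp w
              simp only [LinearMap.comp_apply, LinearMap.zero_apply] at h1
              rw [hrep] at h1
              simp only [map_sum, LinearMap.lTensor_tmul] at h1
              have h2 := sum_tmul_eq_zero (M := L) (N := E ⧸ F) (f := g) (y := fun i => F.mkQ (x i)) hli h1 i
              rwa [Submodule.mkQ_apply, Submodule.Quotient.mk_eq_zero] at h2
            have hw : w = ∑ i, (g i) ⊗ₜ[K] (⟨x i, hmem i⟩ : ↥F) := by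
              apply hjinj
              rw [hrep, map_sum]
              refine Finset.sum_congr rfl fun i _ => ?_
              show (g i) ⊗ₜ[K] (x i) = LinearMap.lTensor L F.subtype ((g i) ⊗ₜ[K] (⟨x i, hmem i⟩ : ↥F))
              rw [LinearMap.lTensor_tmul]
              rfl
            rw [hw, map_sum]
            refine absv_sum_le v hna _ _ hr0 fun i _ => ?_
            have hψi : ψ ((g i) ⊗ₜ[K] (⟨x i, hmem i⟩ : ↥F))
                = ((g i : L) : ↥F →ₗ[K] K) (⟨x i, hmem i⟩ : ↥F) := by
              show TensorProduct.lift (BddLin v ↥F pF).subtype _ = _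
              rw [TensorProduct.lift.tmul]
              rfl
            rw [hψi]
            exact le_trans ((hnrm_spec (g i)).2 ⟨x i, hmem i⟩) (hbd i)
          · -- dependent case: eliminate one vector
            obtain ⟨c, hcsum, i₁, hci₁⟩ := (Fintype.not_linearIndependent_iff (R := K) (M := L) (v := g)).1 hli
            set t : Finset (Fin (m+1)) := Finset.univ.filter (fun i => c i ≠ 0) with ht
            have htne : t.Nonempty := ⟨i₁, by simp [ht, hci₁]⟩
            obtain ⟨i₀, hi₀t, hmax⟩ := t.exists_max_image (fun i => v (c i) * nrm ↑(g i)) htne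
            have hc0 : c i₀ ≠ 0 := by
              have := (Finset.mem_filter.1 hi₀t).2
              simpa using this
            set d : Fin m → K := fun jj => -(c (i₀.succAbove jj) / c i₀) with hd
            have hsum2 : c i₀ • g i₀ + ∑ jj, c (i₀.succAbove jj) • g (i₀.succAbove jj) = 0 := by
              rw [← Fin.sum_univ_succAbove (fun i => c i • g i) i₀]
              exact hcsum
            have hgi₀ : g i₀ = ∑ jj, d jj • g (i₀.succAbove jj) := by
              have hz : c i₀ • (g i₀ - ∑ jj, d jj • g (i₀.succAbove jj)) = 0 := by
                rw [smul_sub, Finset.smul_sum]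
                have he : ∀ jj ∈ Finset.univ, c i₀ • d jj • g (i₀.succAbove jj)
                    = -(c (i₀.succAbove jj) • g (i₀.succAbove jj)) := by
                  intro jj _
                  have hmu : c i₀ * d jj = -(c (i₀.succAbove jj)) := by
                    simp only [hd]
                    field_simp
                  rw [smul_smul, hmu, neg_smul]
                rw [Finset.sum_congr rfl he, Finset.sum_neg_distrib, sub_neg_eq_add]
                exact hsum2
              rcases smul_eq_zero.1 hz with h | h
              · exact absurd h hc0
              · exact sub_eq_zero.1 h
            have hrep2 : j w = ∑ jj : Fin m,
                (g (i₀.succAbove jj)) ⊗ₜ[K] (x (i₀.succAbove jj) + d jj • x i₀) := by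
              rw [hrep, Fin.sum_univ_succAbove (fun i => (g i) ⊗ₜ[K] (x i)) i₀, hgi₀,
                TensorProduct.sum_tmul, ← Finset.sum_add_distrib]
              refine Finset.sum_congr rfl fun jj _ => ?_
              rw [TensorProduct.smul_tmul, TensorProduct.tmul_add]
              exact add_comm _ _
            refine ih (fun jj => g (i₀.succAbove jj))
              (fun jj => x (i₀.succAbove jj) + d jj • x i₀) w r hr0 ?_ hrep2
            intro jj
            have hnn : 0 ≤ nrm ↑(g (i₀.succAbove jj)) := (hnrm_spec _).1
            have hple : p (x (i₀.succAbove jj) + d jj • x i₀)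
                ≤ max (p (x (i₀.succAbove jj))) (v (d jj) * p (x i₀)) := by
              refine le_trans (hp2 _ _) ?_
              rw [hp1]
            have hkey : nrm ↑(g (i₀.succAbove jj)) * v (d jj) ≤ nrm ↑(g i₀) := by
              by_cases hcj : c (i₀.succAbove jj) = 0
              · have hdz : d jj = 0 := by simp [hd, hcj]
                rw [hdz, v.map_zero, mul_zero]
                exact (hnrm_spec _).1
              · have hmem2 : i₀.succAbove jj ∈ t := by simp [ht, hcj]
                have h1 := hmax _ hmem2
                have hvd : v (d jj) * v (c i₀) = v (c (i₀.succAbove jj)) := by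
                  rw [← v.map_mul]
                  have hdc : d jj * c i₀ = -(c (i₀.succAbove jj)) := by
                    simp only [hd]
                    field_simp
                  rw [hdc, v.map_neg]
                have hvc0 : (0:ℝ) < v (c i₀) := v.pos hc0
                rw [← mul_le_mul_iff_of_pos_right hvc0]
                calc nrm ↑(g (i₀.succAbove jj)) * v (d jj) * v (c i₀)
                    = v (d jj) * v (c i₀) * nrm ↑(g (i₀.succAbove jj)) := by ring
                  _ = v (c (i₀.succAbove jj)) * nrm ↑(g (i₀.succAbove jj)) := by rw [hvd]
                  _ ≤ v (c i₀) * nrm ↑(g i₀) := h1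
                  _ = nrm ↑(g i₀) * v (c i₀) := by ring
            calc nrm ↑(g (i₀.succAbove jj)) * p (x (i₀.succAbove jj) + d jj • x i₀)
                ≤ nrm ↑(g (i₀.succAbove jj))
                    * max (p (x (i₀.succAbove jj))) (v (d jj) * p (x i₀)) :=
                  mul_le_mul_of_nonneg_left hple hnn
              _ = max (nrm ↑(g (i₀.succAbove jj)) * p (x (i₀.succAbove jj)))
                    (nrm ↑(g (i₀.succAbove jj)) * (v (d jj) * p (x i₀))) :=
                  mul_max_of_nonneg _ _ hnn
              _ ≤ r := by
                  refine max_le (hbd _) ?_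
                  calc nrm ↑(g (i₀.succAbove jj)) * (v (d jj) * p (x i₀))
                      = (nrm ↑(g (i₀.succAbove jj)) * v (d jj)) * p (x i₀) := by ring
                    _ ≤ nrm ↑(g i₀) * p (x i₀) :=
                        mul_le_mul_of_nonneg_right hkey (p_nonneg v hp1 hp2 _)
                    _ ≤ r := hbd i₀
    set jr : Submodule K (TensorProduct K L E) := LinearMap.range j with hjr
    -- apply Ingleton to the seminormed space `(TensorProduct K L E, q)` and the subspace `range j`
    have hφbd : ∀ z : ↥jr,
        v ((ψ.comp ((LinearEquiv.ofInjective j hjinj).symm : ↥jr →ₗ[K]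
          TensorProduct K L ↥F)) z) ≤ q (z : TensorProduct K L E) := by
      intro z
      have hje : j ((LinearEquiv.ofInjective j hjinj).symm z) = (z : TensorProduct K L E) := by
        have h1 := (LinearEquiv.ofInjective j hjinj).apply_symm_apply z
        exact congrArg (Subtype.val) h1
      refine le_csInf (hSne (z : TensorProduct K L E)) ?_
      rintro r ⟨hr0, n, g, x, hrep, hbd⟩
      exact keyA n g x _ r hr0 hbd (hje.trans hrep)
    obtain ⟨G, hGext, hGbd⟩ := hI (TensorProduct K L E) q hq_smul hq_add jr
      (ψ.comp ((LinearEquiv.ofInjective j hjinj).symm : ↥jr →ₗ[K]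
        TensorProduct K L ↥F)) hφbd
    have hGtmul : ∀ (f : L) (x : E), v (G (f ⊗ₜ[K] x)) ≤ nrm ↑f * p x :=
      fun f x => le_trans (hGbd _) (hqtmul f x)
    have hmemT : ∀ f : L, G.comp ((TensorProduct.mk K L E) f) ∈ BddLin v E p := by
      intro f
      exact ⟨nrm ↑f, fun x => hGtmul f x⟩
    -- the extension property of `G` on pure tensors
    have hext : ∀ (f : L) (y : ↥F), G (f ⊗ₜ[K] (y : E)) = ((f : L) : ↥F →ₗ[K] K) y := by
      intro f y
      have hjfy : j (f ⊗ₜ[K] y) = f ⊗ₜ[K] (y : E) := by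
        show LinearMap.lTensor L F.subtype (f ⊗ₜ[K] y) = _
        rw [LinearMap.lTensor_tmul]
        rfl
      have hmem3 : f ⊗ₜ[K] (y : E) ∈ jr := LinearMap.mem_range.2 ⟨f ⊗ₜ[K] y, hjfy⟩
      have h2 : (LinearEquiv.ofInjective j hjinj).symm ⟨f ⊗ₜ[K] (y : E), hmem3⟩ = f ⊗ₜ[K] y := by
        rw [LinearEquiv.symm_apply_eq]
        apply Subtype.ext
        exact hjfy.symm
      have h1 := hGext ⟨f ⊗ₜ[K] (y : E), hmem3⟩
      rw [show ((⟨f ⊗ₜ[K] (y : E), hmem3⟩ : ↥jr) : TensorProduct K L E) = f ⊗ₜ[K] (y : E)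
        from rfl] at h1
      rw [h1, LinearMap.comp_apply, LinearEquiv.coe_coe, h2]
      show TensorProduct.lift (BddLin v ↥F pF).subtype (f ⊗ₜ[K] y) = _
      rw [TensorProduct.lift.tmul]
      rfl
    refine ⟨{ toFun := fun f => ⟨G.comp ((TensorProduct.mk K L E) f), hmemT f⟩
              map_add' := by
                intro f f'
                apply Subtype.ext
                apply LinearMap.ext
                intro x
                show G ((f + f') ⊗ₜ[K] x) = G (f ⊗ₜ[K] x) + G (f' ⊗ₜ[K] x)
                rw [TensorProduct.add_tmul, map_add]
              map_smul' := by
                intro cc f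
                apply Subtype.ext
                apply LinearMap.ext
                intro x
                show G ((cc • f) ⊗ₜ[K] x) = cc * G (f ⊗ₜ[K] x)
                rw [← TensorProduct.smul_tmul', map_smul, smul_eq_mul] }, ?_⟩
    intro f
    constructor
    · intro y
      exact hext f y
    · apply le_antisymm
      · exact opSemin_le (f := G.comp ((TensorProduct.mk K L E) f)) v (hnrm_spec f).1
          fun x => hGtmul f x
      · have hTf := opSemin_spec v hp1 hp2 (hmemT f)
        refine opSemin_le (f := (f : ↥F →ₗ[K] K)) v hTf.1 fun y => ?_
        rw [← hext f y]
        exact hTf.2 (y : E)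
  · -- linear extender implies Ingleton
    intro hLE E _ _ p hp1 hp2 F f hf
    obtain ⟨T, hT⟩ := hLE E p hp1 hp2 F
    have hp1F : ∀ (c : K) (x : ↥F), p ((c • x : ↥F) : E) = v c * p (x : E) := by
      intro c x
      exact hp1 c (x : E)
    have hp2F : ∀ x y : ↥F, p ((x + y : ↥F) : E) ≤ max (p (x : E)) (p (y : E)) :=
      fun x y => hp2 (x : E) (y : E)
    have hfb : f ∈ BddLin v ↥F (fun x : ↥F => p (x : E)) := ⟨1, by simpa using hf⟩
    set fb : ↥(BddLin v ↥F (fun x : ↥F => p (x : E))) := ⟨f, hfb⟩ with hfbdef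
    obtain ⟨hext, hnorm⟩ := hT fb
    refine ⟨↑(T fb), fun x => hext x, fun x => ?_⟩
    have hb := (opSemin_spec v hp1 hp2 (T fb).2).2 x
    have h1 : opSemin v ↥F (fun x : ↥F => p (x : E)) f ≤ 1 :=
      opSemin_le v zero_le_one (by simpa using hf)
    calc v ((↑(T fb) : E →ₗ[K] K) x) ≤ opSemin v E p ↑(T fb) * p x := hb
      _ = opSemin v ↥F (fun x : ↥F => p (x : E)) f * p x := by rw [hnorm]
      _ ≤ 1 * p x := mul_le_mul_of_nonneg_right h1 (p_nonneg v hp1 hp2 x)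
      _ = p x := one_mul _
end
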